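/- Cyclic hashing is not uniform when n is even: with h₁ : Σ → GF(2)[x]/(x^L+1) a uniformly random function and h(a₁,…,a_n) = Σᵢ h₁(aᵢ) x^{n-i} mod (x^L+1), for n even and n ≤ L we have P(h(a,a,…,a) = 0) ≥ 2^{-(L-1)} > 2^{-L}. -/

import Mathlib

noncomputable def prob (Ω : Type*) (p : Ω → Prop) : ℚ :=
  (Nat.card {ω : Ω // p ω} : ℚ) / (Nat.card Ω : ℚ)

open Polynomial

theorem cyclic_not_uniform_even_n
    {σ : Type*} [Fintype σ] (n L : ℕ) (hn : Even n) (hn0 : 0 < n) (hnL : n ≤ L)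
    (a : σ) :
    (1 : ℚ) / 2 ^ (L - 1) ≤
      prob (σ → Polynomial (ZMod 2) ⧸ Ideal.span {(X : Polynomial (ZMod 2)) ^ L + 1})
        (fun h₁ => (∑ i : Fin n, h₁ a *
          (Ideal.Quotient.mk (Ideal.span {(X : Polynomial (ZMod 2)) ^ L + 1}) X)
            ^ (n - 1 - (i : ℕ))) = 0) ∧
    (1 : ℚ) / 2 ^ L <
      prob (σ → Polynomial (ZMod 2) ⧸ Ideal.span {(X : Polynomial (ZMod 2)) ^ L + 1})
        (fun h₁ => (∑ i : Fin n, h₁ a *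
          (Ideal.Quotient.mk (Ideal.span {(X : Polynomial (ZMod 2)) ^ L + 1}) X)
            ^ (n - 1 - (i : ℕ))) = 0) := by
  classical
  have hL : 0 < L := lt_of_lt_of_le hn0 hnL
  set f : Polynomial (ZMod 2) := X ^ L + 1 with hfdef
  have hsub : ∀ p q : Polynomial (ZMod 2), p - q = p + q := fun p q => CharTwo.sub_eq_add p q
  have hmono : f.Monic := monic_X_pow_add (by rw [degree_one]; exact_mod_cast hL)
  have hdeg : f.natDegree = L := by
    rw [hfdef, ← C_1, natDegree_X_pow_add_C]
  -- the quotient ring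
  set I : Ideal (Polynomial (ZMod 2)) := Ideal.span {f} with hI
  let R := Polynomial (ZMod 2) ⧸ I
  -- basis and cardinality
  have hb : Module.Basis (Fin f.natDegree) (ZMod 2) (AdjoinRoot f) := AdjoinRoot.powerBasisAux' hmono
  have hRdef : R = AdjoinRoot f := rfl
  have e0 : R ≃ (Fin f.natDegree → ZMod 2) := hb.equivFun.toEquiv
  have hfinR : Finite R := Finite.of_equiv _ e0.symm
  have hcardR : Nat.card R = 2 ^ L := by
    rw [Nat.card_congr e0, Nat.card_fun, Nat.card_eq_fintype_card (α := ZMod 2),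
      ZMod.card, Nat.card_eq_fintype_card, Fintype.card_fin, hdeg]
  -- key elements
  set g : Polynomial (ZMod 2) := ∑ i ∈ Finset.range L, X ^ i with hg
  have hgeom : g * (X + 1) = f := by
    have := geom_sum_mul (X : Polynomial (ZMod 2)) L
    rwa [hsub, hsub] at this
  set x : R := Ideal.Quotient.mk I X with hx
  set S : R := ∑ i : Fin n, x ^ (n - 1 - (i : ℕ)) with hS
  set q : R := Ideal.Quotient.mk I g with hq
  have hq0 : q ≠ 0 := by
    intro h
    rw [hq, Ideal.Quotient.eq_zero_iff_mem, hI, Ideal.mem_span_singleton] at h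
    have hg0 : g ≠ 0 := by
      intro h0
      have : g.coeff 0 = 1 := by
        rw [hg, finset_sum_coeff]
        simp [coeff_X_pow, Finset.sum_ite_eq', hL]
      rw [h0] at this
      simp at this
    have h1 : f.natDegree ≤ g.natDegree := natDegree_le_of_dvd h hg0
    have h2 : g.natDegree ≤ L - 1 := by
      apply natDegree_sum_le_of_forall_le
      intro i hi
      rw [natDegree_X_pow]
      have := Finset.mem_range.mp hi
      omega
    omega
  have hSdvd : (X + 1 : Polynomial (ZMod 2)) ∣ ∑ j ∈ Finset.range n, X ^ j := by
    have : (X - C (1 : ZMod 2)) ∣ ∑ j ∈ Finset.range n, X ^ j := by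
      rw [dvd_iff_isRoot]
      simp only [IsRoot, eval_finset_sum, eval_pow, eval_X, one_pow]
      rw [Finset.sum_const, Finset.card_range, nsmul_eq_mul, mul_one]
      rw [ZMod.natCast_eq_zero_iff]
      exact hn.two_dvd
    rwa [C_1, hsub] at this
  have hSmk : S = Ideal.Quotient.mk I (∑ j ∈ Finset.range n, X ^ j) := by
    have h1 : S = ∑ i ∈ Finset.range n, x ^ (n - 1 - i) :=
      Fin.sum_univ_eq_sum_range (fun i => x ^ (n - 1 - i)) n
    rw [h1, Finset.sum_range_reflect (fun j => x ^ j) n, map_sum]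
    exact Finset.sum_congr rfl fun i _ => (map_pow _ _ _).symm
  have hqS : q * S = 0 := by
    obtain ⟨t, ht⟩ := hSdvd
    rw [hq, hSmk, ← map_mul, Ideal.Quotient.eq_zero_iff_mem, hI, Ideal.mem_span_singleton]
    exact ⟨t, by rw [ht, ← mul_assoc, hgeom]⟩
  -- counting
  set D := ({ j : σ // j ≠ a } → R) with hD
  have hfinD : Finite D := by infer_instance
  let e1 : (σ → R) ≃ R × D := Equiv.funSplitAt a R
  set P : (σ → R) → Prop := fun h₁ => (∑ i : Fin n, h₁ a * x ^ (n - 1 - (i : ℕ))) = 0 with hP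
  have hPiff : ∀ h₁ : σ → R, P h₁ ↔ h₁ a * S = 0 := by
    intro h₁
    simp only [hP, hS]
    rw [← Finset.mul_sum]
  have he1 : ∀ h₁ : σ → R, (e1 h₁).1 = h₁ a := fun h₁ => rfl
  have e2 : {h₁ : σ → R // P h₁} ≃ {v : R // v * S = 0} × D :=
    (Equiv.subtypeEquiv e1 (fun h₁ => by rw [he1 h₁]; exact hPiff h₁)).trans
      Equiv.prodSubtypeFstEquivSubtypeProd
  set m : ℕ := Nat.card {v : R // v * S = 0} with hm
  set d : ℕ := Nat.card D with hd
  have hcardEv : Nat.card {h₁ : σ → R // P h₁} = m * d := by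
    rw [Nat.card_congr e2, Nat.card_prod]
  have hcardΩ : Nat.card (σ → R) = 2 ^ L * d := by
    rw [Nat.card_congr e1, Nat.card_prod, hcardR]
  have hd0 : 0 < d := Nat.card_pos
  have hm2 : 2 ≤ m := by
    have : Nontrivial {v : R // v * S = 0} :=
      ⟨⟨0, by rw [zero_mul]⟩, ⟨q, hqS⟩, by simp [Subtype.ext_iff, Ne.symm hq0]⟩
    have := Finite.one_lt_card_iff_nontrivial.mpr this
    omega
  have hprob : prob (σ → R) P = (m : ℚ) / (2 ^ L : ℚ) := by
    rw [prob, hcardEv, hcardΩ]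
    push_cast
    rw [mul_div_mul_right _ _ (by exact_mod_cast hd0.ne')]
  constructor
  · rw [hprob]
    have h2L : (2 : ℚ) ^ L = 2 * 2 ^ (L - 1) := by
      rw [← pow_succ']
      congr 1
      omega
    have h1 : (1 : ℚ) / 2 ^ (L - 1) = 2 / 2 ^ L := by
      rw [div_eq_div_iff (by positivity) (by positivity), one_mul, h2L]
    rw [h1]
    gcongr
    exact_mod_cast hm2
  · rw [hprob]
    have : (1:ℚ) < m := by exact_mod_cast (show (1:ℕ) < m by omega)
    gcongr
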